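/- For every even integer k ≥ 6 and every choice of a (k−4)-regular graph H1 of order 2k−3 and a (k−6)-regular graph H2 of order 2k−5, the graphs Γ and Γ' defined below both have vertex-connectivity exactly 3. -/
import Mathlib


open scoped Classical

/-- Two finite graphs are cospectral (w.r.t. the adjacency matrix) if their adjacency
matrices have the same characteristic polynomial. -/
noncomputable def Cospectral {V W : Type*} [Fintype V] [DecidableEq V] [Fintype W]
    [DecidableEq W] (G : SimpleGraph V) (H : SimpleGraph W) : Prop :=
  (G.adjMatrix ℤ).charpoly = (H.adjMatrix ℤ).charpoly

/-- A graph is `d`-regular if every vertex has exactly `d` neighbors. -/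
def IsRegularGraph {V : Type*} (G : SimpleGraph V) (d : ℕ) : Prop :=
  ∀ v : V, (G.neighborSet v).ncard = d

/-- `G` has vertex-connectivity exactly `n`: some set of `n` vertices disconnects `G`
(the graph induced on its complement is not connected), and no smaller set does. -/
def HasVertexConnectivity {V : Type*} (G : SimpleGraph V) (n : ℕ) : Prop :=
  (∃ S : Set V, S.ncard = n ∧ ¬(G.induce Sᶜ).Connected) ∧
    ∀ S : Set V, S.ncard < n → (G.induce Sᶜ).Connected

/-- `G` has edge-connectivity exactly `n`: some set of `n` edges of `G` disconnects `G`,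
and no smaller set of edges does. -/
def HasEdgeConnectivity {V : Type*} (G : SimpleGraph V) (n : ℕ) : Prop :=
  (∃ F : Set (Sym2 V), F ⊆ G.edgeSet ∧ F.ncard = n ∧ ¬(G.deleteEdges F).Connected) ∧
    ∀ F : Set (Sym2 V), F ⊆ G.edgeSet → F.ncard < n → (G.deleteEdges F).Connected

/-- Adjacency rule of the cycle of length `k+1` on `{0, …, k}` (entries of `C`). -/
def cycRel (k : ℕ) (a b : ℕ) : Prop :=
  (a + 1) % (k + 1) = b ∨ (b + 1) % (k + 1) = a

/-- Entries of the `2k × 2k` matrix `L = [[J_{k-1}, O], [O, J_{k+1} - C]]`. -/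
def LRel (k : ℕ) (x x' : Fin (2 * k)) : Prop :=
  (x.val < k - 1 ∧ x'.val < k - 1) ∨
    (k - 1 ≤ x.val ∧ k - 1 ≤ x'.val ∧ ¬cycRel k (x.val - (k - 1)) (x'.val - (k - 1)))

/-- The class `Y`, ordered as: the `2k-3` vertices of `H1`, the `2k-5` vertices of `H2`,
then `k-1` vertices, then `k+1` vertices (order `6k-8`). -/
abbrev YT (k : ℕ) := Fin (2 * k - 3) ⊕ (Fin (2 * k - 5) ⊕ (Fin (k - 1) ⊕ Fin (k + 1)))

/-- The vertex set of `Γ` and `Γ'`: `X1` (size `2k`), `X2` (size `2k`), `Y`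
(size `6k-8`); total order `10k-8`. -/
abbrev VE (k : ℕ) := Fin (2 * k) ⊕ (Fin (2 * k) ⊕ YT k)

/-- The column block (`1, 2, 3, 4`, or `0` for the zero block) of a column of the
`4k × (6k-8)` matrix `[M1; M2]`: the five column blocks have widths
`k-2, k-2, k-2, k-2, 2k`. -/
def colBlk (k : ℕ) : YT k → ℕ
  | Sum.inl c => if c.val < k - 2 then 1 else if c.val < 2 * k - 4 then 2 else 3
  | Sum.inr (Sum.inl c) => if c.val < k - 3 then 3 else 4
  | _ => 0

/-- Entries of the matrix `B`, the adjacency matrix of the graph `H` induced on `Y`: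
`[[B1, O, J, O], [O, B2, O, J], [J, O, J-I, O], [O, J, O, J-I]]`
(the diagonal is removed by `SimpleGraph.fromRel`). -/
def yRel (k : ℕ) (H1 : SimpleGraph (Fin (2 * k - 3))) (H2 : SimpleGraph (Fin (2 * k - 5))) :
    YT k → YT k → Prop
  | Sum.inl a, Sum.inl b => H1.Adj a b
  | Sum.inl _, Sum.inr (Sum.inr (Sum.inl _)) => True
  | Sum.inr (Sum.inl a), Sum.inr (Sum.inl b) => H2.Adj a b
  | Sum.inr (Sum.inl _), Sum.inr (Sum.inr (Sum.inr _)) => True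
  | Sum.inr (Sum.inr (Sum.inl _)), Sum.inr (Sum.inr (Sum.inl _)) => True
  | Sum.inr (Sum.inr (Sum.inr _)), Sum.inr (Sum.inr (Sum.inr _)) => True
  | _, _ => False

/-- The relation defining the graph with adjacency matrix
`[[A1, L, M1], [Lᵀ, A2, M2], [M1ᵀ, M2ᵀ, B]]` where `A1 = A2 = L - I` and where the
matrix `[M1; M2]` has the all-ones block `J_{k,k-2}` exactly in row block `mrow b` of
column block `b` (rows are grouped into four blocks of height `k`). -/
def edgeRel (k : ℕ) (H1 : SimpleGraph (Fin (2 * k - 3))) (H2 : SimpleGraph (Fin (2 * k - 5)))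
    (mrow : ℕ → ℕ) : VE k → VE k → Prop
  | Sum.inl x, Sum.inl x' => LRel k x x'
  | Sum.inl x, Sum.inr (Sum.inl x') => LRel k x x'
  | Sum.inl x, Sum.inr (Sum.inr c) =>
      colBlk k c ≠ 0 ∧ mrow (colBlk k c) = (if x.val < k then 1 else 2)
  | Sum.inr (Sum.inl x), Sum.inr (Sum.inl x') => LRel k x x'
  | Sum.inr (Sum.inl x), Sum.inr (Sum.inr c) =>
      colBlk k c ≠ 0 ∧ mrow (colBlk k c) = (if x.val < k then 3 else 4)
  | Sum.inr (Sum.inr c), Sum.inr (Sum.inr c') => yRel k H1 H2 c c'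
  | _, _ => False

/-- Row-block placement for `[M1; M2] = [[O,J,O,O,O],[O,O,J,O,O],[J,O,O,O,O],[O,O,O,J,O]]`. -/
def mrowGamma : ℕ → ℕ := fun b =>
  if b = 1 then 3 else if b = 2 then 1 else if b = 3 then 2 else if b = 4 then 4 else 0

/-- Row-block placement for `[M1'; M2'] = [[O,O,J,O,O],[O,J,O,O,O],[O,O,O,J,O],[J,O,O,O,O]]`. -/
def mrowGamma' : ℕ → ℕ := fun b =>
  if b = 1 then 4 else if b = 2 then 2 else if b = 3 then 1 else if b = 4 then 3 else 0

/-- The graph `Γ`. -/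
def GammaE (k : ℕ) (H1 : SimpleGraph (Fin (2 * k - 3))) (H2 : SimpleGraph (Fin (2 * k - 5))) :
    SimpleGraph (VE k) := SimpleGraph.fromRel (edgeRel k H1 H2 mrowGamma)

/-- The graph `Γ'`, obtained from `Γ` by Godsil–McKay switching. -/
def GammaE' (k : ℕ) (H1 : SimpleGraph (Fin (2 * k - 3))) (H2 : SimpleGraph (Fin (2 * k - 5))) :
    SimpleGraph (VE k) := SimpleGraph.fromRel (edgeRel k H1 H2 mrowGamma')

namespace Stmt13Aux

/-- Vertex constructors. -/
def vX1 (k i : ℕ) (h : i < 2*k) : VE k := Sum.inl ⟨i, h⟩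
def vX2 (k i : ℕ) (h : i < 2*k) : VE k := Sum.inr (Sum.inl ⟨i, h⟩)
def va (k i : ℕ) (h : i < 2*k-3) : VE k := Sum.inr (Sum.inr (Sum.inl ⟨i, h⟩))
def vb (k i : ℕ) (h : i < 2*k-5) : VE k := Sum.inr (Sum.inr (Sum.inr (Sum.inl ⟨i, h⟩)))
def vc (k i : ℕ) (h : i < k-1) : VE k := Sum.inr (Sum.inr (Sum.inr (Sum.inr (Sum.inl ⟨i, h⟩))))
def vd (k i : ℕ) (h : i < k+1) : VE k := Sum.inr (Sum.inr (Sum.inr (Sum.inr (Sum.inr ⟨i, h⟩))))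

def rowOf (k : ℕ) : VE k → ℕ
  | Sum.inl x => if x.val < k then 1 else 2
  | Sum.inr (Sum.inl x) => if x.val < k then 3 else 4
  | _ => 0

lemma succ_mod_iff (k a b : ℕ) (ha : a ≤ k) :
    (a+1) % (k+1) = b ↔ ((a < k ∧ a + 1 = b) ∨ (a = k ∧ b = 0)) := by
  rcases Nat.lt_or_ge a k with h | h
  · rw [Nat.mod_eq_of_lt (by omega)]; omega
  · have hak : a = k := le_antisymm ha h
    subst hak
    rw [Nat.mod_self]; omega

lemma cycRel_iff (k a b : ℕ) (ha : a ≤ k) (hb : b ≤ k) :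
    cycRel k a b ↔ (((a < k ∧ a + 1 = b) ∨ (a = k ∧ b = 0)) ∨ ((b < k ∧ b + 1 = a) ∨ (b = k ∧ a = 0))) := by
  unfold cycRel
  rw [succ_mod_iff k a b ha, succ_mod_iff k b a hb]

lemma pick3e {α : Type*} [Finite α] (S : Set α) (hS : S.ncard ≤ 2) {x y z : α}
    (hxy : x ≠ y) (hxz : x ≠ z) (hyz : y ≠ z) :
    ∃ w, (w = x ∨ w = y ∨ w = z) ∧ w ∉ S := by
  by_contra h
  push_neg at h
  have hsub : ({x, y, z} : Set α) ⊆ S := by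
    intro w hw
    simp only [Set.mem_insert_iff, Set.mem_singleton_iff] at hw
    exact h w hw
  have h3 : ({x, y, z} : Set α).ncard = 3 := by
    rw [Set.ncard_insert_of_notMem (by simp [hxy, hxz]) (Set.toFinite _),
        Set.ncard_pair hyz]
  have hle := Set.ncard_le_ncard hsub (Set.toFinite S)
  omega

section picks
variable {k : ℕ} (S : Set (VE k))

lemma pick_a (hS : S.ncard ≤ 2) (lo : ℕ) (hhi : lo + 2 < 2*k-3) :
    ∃ i, ∃ hi : i < 2*k-3, lo ≤ i ∧ i ≤ lo+2 ∧ va k i hi ∉ S := by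
  obtain ⟨w, hw, hws⟩ := pick3e S hS (x := va k lo (by omega)) (y := va k (lo+1) (by omega))
    (z := va k (lo+2) (by omega))
    (by simp only [va, ne_eq, Sum.inr.injEq, Sum.inl.injEq, Fin.mk.injEq]; omega)
    (by simp only [va, ne_eq, Sum.inr.injEq, Sum.inl.injEq, Fin.mk.injEq]; omega)
    (by simp only [va, ne_eq, Sum.inr.injEq, Sum.inl.injEq, Fin.mk.injEq]; omega)
  rcases hw with rfl | rfl | rfl
  · exact ⟨lo, by omega, le_rfl, by omega, hws⟩
  · exact ⟨lo+1, by omega, by omega, by omega, hws⟩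
  · exact ⟨lo+2, by omega, by omega, by omega, hws⟩

lemma pick_b (hS : S.ncard ≤ 2) (lo : ℕ) (hhi : lo + 2 < 2*k-5) :
    ∃ i, ∃ hi : i < 2*k-5, lo ≤ i ∧ i ≤ lo+2 ∧ vb k i hi ∉ S := by
  obtain ⟨w, hw, hws⟩ := pick3e S hS (x := vb k lo (by omega)) (y := vb k (lo+1) (by omega))
    (z := vb k (lo+2) (by omega))
    (by simp only [vb, ne_eq, Sum.inr.injEq, Sum.inl.injEq, Fin.mk.injEq]; omega)
    (by simp only [vb, ne_eq, Sum.inr.injEq, Sum.inl.injEq, Fin.mk.injEq]; omega)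
    (by simp only [vb, ne_eq, Sum.inr.injEq, Sum.inl.injEq, Fin.mk.injEq]; omega)
  rcases hw with rfl | rfl | rfl
  · exact ⟨lo, by omega, le_rfl, by omega, hws⟩
  · exact ⟨lo+1, by omega, by omega, by omega, hws⟩
  · exact ⟨lo+2, by omega, by omega, by omega, hws⟩

lemma pick_c (hS : S.ncard ≤ 2) (hhi : 2 < k-1) :
    ∃ i, ∃ hi : i < k-1, vc k i hi ∉ S := by
  obtain ⟨w, hw, hws⟩ := pick3e S hS (x := vc k 0 (by omega)) (y := vc k 1 (by omega))
    (z := vc k 2 (by omega))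
    (by simp only [vc, ne_eq, Sum.inr.injEq, Sum.inl.injEq, Fin.mk.injEq]; omega)
    (by simp only [vc, ne_eq, Sum.inr.injEq, Sum.inl.injEq, Fin.mk.injEq]; omega)
    (by simp only [vc, ne_eq, Sum.inr.injEq, Sum.inl.injEq, Fin.mk.injEq]; omega)
  rcases hw with rfl | rfl | rfl
  · exact ⟨0, by omega, hws⟩
  · exact ⟨1, by omega, hws⟩
  · exact ⟨2, by omega, hws⟩

lemma pick_d (hS : S.ncard ≤ 2) (hhi : 2 < k+1) :
    ∃ i, ∃ hi : i < k+1, vd k i hi ∉ S := by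
  obtain ⟨w, hw, hws⟩ := pick3e S hS (x := vd k 0 (by omega)) (y := vd k 1 (by omega))
    (z := vd k 2 (by omega))
    (by simp only [vd, ne_eq, Sum.inr.injEq, Fin.mk.injEq]; omega)
    (by simp only [vd, ne_eq, Sum.inr.injEq, Fin.mk.injEq]; omega)
    (by simp only [vd, ne_eq, Sum.inr.injEq, Fin.mk.injEq]; omega)
  rcases hw with rfl | rfl | rfl
  · exact ⟨0, by omega, hws⟩
  · exact ⟨1, by omega, hws⟩
  · exact ⟨2, by omega, hws⟩

lemma pick_X1 (hS : S.ncard ≤ 2) (lo : ℕ) (hhi : lo + 2 < 2*k) :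
    ∃ i, ∃ hi : i < 2*k, lo ≤ i ∧ i ≤ lo+2 ∧ vX1 k i hi ∉ S := by
  obtain ⟨w, hw, hws⟩ := pick3e S hS (x := vX1 k lo (by omega)) (y := vX1 k (lo+1) (by omega))
    (z := vX1 k (lo+2) (by omega))
    (by simp only [vX1, ne_eq, Sum.inl.injEq, Fin.mk.injEq]; omega)
    (by simp only [vX1, ne_eq, Sum.inl.injEq, Fin.mk.injEq]; omega)
    (by simp only [vX1, ne_eq, Sum.inl.injEq, Fin.mk.injEq]; omega)
  rcases hw with rfl | rfl | rfl
  · exact ⟨lo, by omega, le_rfl, by omega, hws⟩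
  · exact ⟨lo+1, by omega, by omega, by omega, hws⟩
  · exact ⟨lo+2, by omega, by omega, by omega, hws⟩

lemma pick_X2 (hS : S.ncard ≤ 2) (lo : ℕ) (hhi : lo + 2 < 2*k) :
    ∃ i, ∃ hi : i < 2*k, lo ≤ i ∧ i ≤ lo+2 ∧ vX2 k i hi ∉ S := by
  obtain ⟨w, hw, hws⟩ := pick3e S hS (x := vX2 k lo (by omega)) (y := vX2 k (lo+1) (by omega))
    (z := vX2 k (lo+2) (by omega))
    (by simp only [vX2, ne_eq, Sum.inr.injEq, Sum.inl.injEq, Fin.mk.injEq]; omega)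
    (by simp only [vX2, ne_eq, Sum.inr.injEq, Sum.inl.injEq, Fin.mk.injEq]; omega)
    (by simp only [vX2, ne_eq, Sum.inr.injEq, Sum.inl.injEq, Fin.mk.injEq]; omega)
  rcases hw with rfl | rfl | rfl
  · exact ⟨lo, by omega, le_rfl, by omega, hws⟩
  · exact ⟨lo+1, by omega, by omega, by omega, hws⟩
  · exact ⟨lo+2, by omega, by omega, by omega, hws⟩

end picks

section adj
variable (k : ℕ) (H1 : SimpleGraph (Fin (2*k-3))) (H2 : SimpleGraph (Fin (2*k-5)))
variable (mrow : ℕ → ℕ)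

lemma adj_xy {w : VE k} {c : YT k} (hw : rowOf k w ≠ 0) (hc : colBlk k c ≠ 0)
    (h : mrow (colBlk k c) = rowOf k w) :
    (SimpleGraph.fromRel (edgeRel k H1 H2 mrow)).Adj w (Sum.inr (Sum.inr c)) := by
  rw [SimpleGraph.fromRel_adj]
  rcases w with x | x | y
  · exact ⟨by simp, Or.inl ⟨hc, h⟩⟩
  · exact ⟨by simp, Or.inl ⟨hc, h⟩⟩
  · exact absurd rfl hw

lemma adj_ac (i hi j hj) :
    (SimpleGraph.fromRel (edgeRel k H1 H2 mrow)).Adj (va k i hi) (vc k j hj) := by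
  rw [SimpleGraph.fromRel_adj]
  exact ⟨by simp [va, vc], Or.inl trivial⟩

lemma adj_bd (i hi j hj) :
    (SimpleGraph.fromRel (edgeRel k H1 H2 mrow)).Adj (vb k i hi) (vd k j hj) := by
  rw [SimpleGraph.fromRel_adj]
  exact ⟨by simp [vb, vd], Or.inl trivial⟩

lemma adj_X1X1 {i j : ℕ} (hi hj) (hne : i ≠ j) (h : LRel k ⟨i, hi⟩ ⟨j, hj⟩) :
    (SimpleGraph.fromRel (edgeRel k H1 H2 mrow)).Adj (vX1 k i hi) (vX1 k j hj) := by
  rw [SimpleGraph.fromRel_adj]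
  exact ⟨by simp only [vX1, ne_eq, Sum.inl.injEq, Fin.mk.injEq]; exact hne, Or.inl h⟩

lemma adj_X2X2 {i j : ℕ} (hi hj) (hne : i ≠ j) (h : LRel k ⟨i, hi⟩ ⟨j, hj⟩) :
    (SimpleGraph.fromRel (edgeRel k H1 H2 mrow)).Adj (vX2 k i hi) (vX2 k j hj) := by
  rw [SimpleGraph.fromRel_adj]
  exact ⟨by simp only [vX2, ne_eq, Sum.inr.injEq, Sum.inl.injEq, Fin.mk.injEq]; exact hne,
    Or.inl h⟩

lemma LRel_Q (hk : 6 ≤ k) {j : ℕ} (hl : k+1 ≤ j) (hr : j ≤ k+3) (hj : j < 2*k) (h1 : k-1 < 2*k) :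
    LRel k ⟨k-1, h1⟩ ⟨j, hj⟩ := by
  show (k-1 < k-1 ∧ j < k-1) ∨ (k-1 ≤ k-1 ∧ k-1 ≤ j ∧ ¬cycRel k (k-1-(k-1)) (j-(k-1)))
  right
  refine ⟨le_rfl, by omega, ?_⟩
  intro hcy
  rw [cycRel_iff k _ _ (by omega) (by omega)] at hcy
  omega

end adj
end Stmt13Aux
namespace Stmt13Aux

lemma conn_del (k : ℕ) (hk : 6 ≤ k) (H1 : SimpleGraph (Fin (2*k-3)))
    (H2 : SimpleGraph (Fin (2*k-5))) (mrow : ℕ → ℕ) (b1 b2 b3 b4 : ℕ)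
    (hb1 : b1 = 1 ∨ b1 = 2 ∨ b1 = 3 ∨ b1 = 4) (hb2 : b2 = 1 ∨ b2 = 2 ∨ b2 = 3 ∨ b2 = 4)
    (hb3 : b3 = 1 ∨ b3 = 2 ∨ b3 = 3 ∨ b3 = 4) (hb4 : b4 = 1 ∨ b4 = 2 ∨ b4 = 3 ∨ b4 = 4)
    (hm1 : mrow b1 = 1) (hm2 : mrow b2 = 2) (hm3 : mrow b3 = 3) (hm4 : mrow b4 = 4)
    (halt12 : b1 ≤ 2 ↔ ¬ b2 ≤ 2) (halt34 : b3 ≤ 2 ↔ ¬ b4 ≤ 2)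
    (hbr3 : (mrow 3 = 1 ∧ b1 = 3) ∨ (mrow 3 = 2 ∧ b2 = 3))
    (S : Set (VE k)) (hS : S.ncard ≤ 2) :
    ((SimpleGraph.fromRel (edgeRel k H1 H2 mrow)).induce Sᶜ).Connected := by
  set G := SimpleGraph.fromRel (edgeRel k H1 H2 mrow) with hG
  set Gs := G.induce Sᶜ with hGs
  have step : ∀ {u v : VE k} (hu : u ∈ Sᶜ) (hv : v ∈ Sᶜ), G.Adj u v →
      Gs.Reachable ⟨u, hu⟩ ⟨v, hv⟩ := by
    intro u v hu hv h
    exact SimpleGraph.Adj.reachable h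
  -- hubs
  obtain ⟨ci, hci, hc0⟩ := pick_c S hS (by omega)
  obtain ⟨di, hdi, hd0⟩ := pick_d S hS (by omega)
  have hc0m : vc k ci hci ∈ Sᶜ := hc0
  have hd0m : vd k di hdi ∈ Sᶜ := hd0
  -- reach from any X-vertex of the row of block b to the hub of block b
  have xreach : ∀ b : ℕ, (b = 1 ∨ b = 2 ∨ b = 3 ∨ b = 4) → ∀ (w : VE k) (hw : w ∈ Sᶜ),
      rowOf k w ≠ 0 → mrow b = rowOf k w →
      Gs.Reachable ⟨w, hw⟩ (if b ≤ 2 then (⟨vc k ci hci, hc0m⟩ : ↥Sᶜ) else ⟨vd k di hdi, hd0m⟩) := by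
    intro b hb w hw hrow hmb
    rcases hb with rfl | rfl | rfl | rfl
    · rw [if_pos (by omega : (1:ℕ) ≤ 2)]
      obtain ⟨i, hi, hlo, hhi2, hni⟩ := pick_a S hS 0 (by omega)
      have hcb : colBlk k (Sum.inl ⟨i, hi⟩) = 1 := by
        simp only [colBlk]; rw [if_pos (by omega)]
      have h1 : G.Adj w (va k i hi) :=
        adj_xy k H1 H2 mrow hrow (by rw [hcb]; omega) (by rw [hcb]; exact hmb)
      exact (step hw hni h1).trans (step hni hc0m (adj_ac k H1 H2 mrow i hi ci hci))
    · rw [if_pos (by omega : (2:ℕ) ≤ 2)]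
      obtain ⟨i, hi, hlo, hhi2, hni⟩ := pick_a S hS (k-2) (by omega)
      have hcb : colBlk k (Sum.inl ⟨i, hi⟩) = 2 := by
        simp only [colBlk]; rw [if_neg (by omega), if_pos (by omega)]
      have h1 : G.Adj w (va k i hi) :=
        adj_xy k H1 H2 mrow hrow (by rw [hcb]; omega) (by rw [hcb]; exact hmb)
      exact (step hw hni h1).trans (step hni hc0m (adj_ac k H1 H2 mrow i hi ci hci))
    · rw [if_neg (by omega : ¬ (3:ℕ) ≤ 2)]
      obtain ⟨i, hi, hlo, hhi2, hni⟩ := pick_b S hS 0 (by omega)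
      have hcb : colBlk k (Sum.inr (Sum.inl ⟨i, hi⟩)) = 3 := by
        simp only [colBlk]; rw [if_pos (by omega)]
      have h1 : G.Adj w (vb k i hi) :=
        adj_xy k H1 H2 mrow hrow (by rw [hcb]; omega) (by rw [hcb]; exact hmb)
      exact (step hw hni h1).trans (step hni hd0m (adj_bd k H1 H2 mrow i hi di hdi))
    · rw [if_neg (by omega : ¬ (4:ℕ) ≤ 2)]
      obtain ⟨i, hi, hlo, hhi2, hni⟩ := pick_b S hS (k-3) (by omega)
      have hcb : colBlk k (Sum.inr (Sum.inl ⟨i, hi⟩)) = 4 := by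
        simp only [colBlk]; rw [if_neg (by omega)]
      have h1 : G.Adj w (vb k i hi) :=
        adj_xy k H1 H2 mrow hrow (by rw [hcb]; omega) (by rw [hcb]; exact hmb)
      exact (step hw hni h1).trans (step hni hd0m (adj_bd k H1 H2 mrow i hi di hdi))
  -- the link between the two hubs
  have hlink : Gs.Reachable ⟨vc k ci hci, hc0m⟩ ⟨vd k di hdi, hd0m⟩ := by
    obtain ⟨w, hw3, hwS⟩ := pick3e S hS (x := vX1 k (k-1) (by omega))
      (y := vX2 k (k-1) (by omega)) (z := va k (2*k-4) (by omega))
      (by simp [vX1, vX2]) (by simp [vX1, va]) (by simp [vX2, va])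
    have hwm : w ∈ Sᶜ := hwS
    rcases hw3 with rfl | rfl | rfl
    · -- bridge X1[k-1]
      have hr1 : rowOf k (vX1 k (k-1) (by omega)) = 1 := by
        simp only [vX1, rowOf]; rw [if_pos (by omega)]
      have r1 := xreach b1 hb1 _ hwm (by omega) (by rw [hm1, hr1])
      obtain ⟨j, hj, hjlo, hjhi, hq⟩ := pick_X1 S hS (k+1) (by omega)
      have hqm : vX1 k j hj ∈ Sᶜ := hq
      have hadj : G.Adj (vX1 k (k-1) (by omega)) (vX1 k j hj) :=
        adj_X1X1 k H1 H2 mrow _ _ (by omega) (LRel_Q k hk (by omega) (by omega) hj _)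
      have hr2 : rowOf k (vX1 k j hj) = 2 := by
        simp only [vX1, rowOf]; rw [if_neg (by omega)]
      have r2 := xreach b2 hb2 _ hqm (by omega) (by rw [hm2, hr2])
      have rall := (r1.symm.trans ((step hwm hqm hadj).trans r2))
      by_cases hble : b1 ≤ 2
      · rw [if_pos hble] at rall
        rw [if_neg (halt12.mp hble)] at rall
        exact rall
      · rw [if_neg hble] at rall
        rw [if_pos (by rcases halt12 with ⟨hx, hy⟩; by_contra hcon; exact hble (hy hcon))] at rall
        exact rall.symm
    · -- bridge X2[k-1]
      have hr1 : rowOf k (vX2 k (k-1) (by omega)) = 3 := by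
        simp only [vX2, rowOf]; rw [if_pos (by omega)]
      have r1 := xreach b3 hb3 _ hwm (by omega) (by rw [hm3, hr1])
      obtain ⟨j, hj, hjlo, hjhi, hq⟩ := pick_X2 S hS (k+1) (by omega)
      have hqm : vX2 k j hj ∈ Sᶜ := hq
      have hadj : G.Adj (vX2 k (k-1) (by omega)) (vX2 k j hj) :=
        adj_X2X2 k H1 H2 mrow _ _ (by omega) (LRel_Q k hk (by omega) (by omega) hj _)
      have hr2 : rowOf k (vX2 k j hj) = 4 := by
        simp only [vX2, rowOf]; rw [if_neg (by omega)]
      have r2 := xreach b4 hb4 _ hqm (by omega) (by rw [hm4, hr2])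
      have rall := (r1.symm.trans ((step hwm hqm hadj).trans r2))
      by_cases hble : b3 ≤ 2
      · rw [if_pos hble] at rall
        rw [if_neg (halt34.mp hble)] at rall
        exact rall
      · rw [if_neg hble] at rall
        rw [if_pos (by rcases halt34 with ⟨hx, hy⟩; by_contra hcon; exact hble (hy hcon))] at rall
        exact rall.symm
    · -- bridge a[2k-4]
      have hcb : colBlk k (Sum.inl ⟨2*k-4, by omega⟩) = 3 := by
        simp only [colBlk]; rw [if_neg (by omega), if_neg (by omega)]
      have hc0a : G.Adj (vc k ci hci) (va k (2*k-4) (by omega)) :=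
        (adj_ac k H1 H2 mrow _ (by omega) ci hci).symm
      rcases hbr3 with ⟨hm3', hb1'⟩ | ⟨hm3', hb2'⟩
      · obtain ⟨j, hj, hjlo, hjhi, hq⟩ := pick_X1 S hS 0 (by omega)
        have hqm : vX1 k j hj ∈ Sᶜ := hq
        have hrj : rowOf k (vX1 k j hj) = 1 := by
          simp only [vX1, rowOf]; rw [if_pos (by omega)]
        have hxa : G.Adj (vX1 k j hj) (va k (2*k-4) (by omega)) :=
          adj_xy k H1 H2 mrow (by omega) (by rw [hcb]; omega) (by rw [hcb, hm3', hrj])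
        have rx := xreach b1 hb1 _ hqm (by omega) (by rw [hm1, hrj])
        rw [hb1', if_neg (by omega : ¬ (3:ℕ) ≤ 2)] at rx
        exact (step hc0m hwm hc0a).trans ((step hwm hqm hxa.symm).trans rx)
      · obtain ⟨j, hj, hjlo, hjhi, hq⟩ := pick_X1 S hS k (by omega)
        have hqm : vX1 k j hj ∈ Sᶜ := hq
        have hrj : rowOf k (vX1 k j hj) = 2 := by
          simp only [vX1, rowOf]; rw [if_neg (by omega)]
        have hxa : G.Adj (vX1 k j hj) (va k (2*k-4) (by omega)) :=
          adj_xy k H1 H2 mrow (by omega) (by rw [hcb]; omega) (by rw [hcb, hm3', hrj])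
        have rx := xreach b2 hb2 _ hqm (by omega) (by rw [hm2, hrj])
        rw [hb2', if_neg (by omega : ¬ (3:ℕ) ≤ 2)] at rx
        exact (step hc0m hwm hc0a).trans ((step hwm hqm hxa.symm).trans rx)
  -- every vertex reaches the c-hub
  have main : ∀ (v : VE k) (hv : v ∈ Sᶜ), Gs.Reachable ⟨v, hv⟩ ⟨vc k ci hci, hc0m⟩ := by
    intro v hv
    rcases v with x | x | a | b | c | d
    · by_cases hx : x.val < k
      · have hr : rowOf k (Sum.inl x : VE k) = 1 := by
          simp only [rowOf]; rw [if_pos hx]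
        have r := xreach b1 hb1 _ hv (by omega) (by rw [hm1, hr])
        by_cases hble : b1 ≤ 2
        · rw [if_pos hble] at r; exact r
        · rw [if_neg hble] at r; exact r.trans hlink.symm
      · have hr : rowOf k (Sum.inl x : VE k) = 2 := by
          simp only [rowOf]; rw [if_neg hx]
        have r := xreach b2 hb2 _ hv (by omega) (by rw [hm2, hr])
        by_cases hble : b2 ≤ 2
        · rw [if_pos hble] at r; exact r
        · rw [if_neg hble] at r; exact r.trans hlink.symm
    · by_cases hx : x.val < k
      · have hr : rowOf k (Sum.inr (Sum.inl x) : VE k) = 3 := by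
          simp only [rowOf]; rw [if_pos hx]
        have r := xreach b3 hb3 _ hv (by omega) (by rw [hm3, hr])
        by_cases hble : b3 ≤ 2
        · rw [if_pos hble] at r; exact r
        · rw [if_neg hble] at r; exact r.trans hlink.symm
      · have hr : rowOf k (Sum.inr (Sum.inl x) : VE k) = 4 := by
          simp only [rowOf]; rw [if_neg hx]
        have r := xreach b4 hb4 _ hv (by omega) (by rw [hm4, hr])
        by_cases hble : b4 ≤ 2
        · rw [if_pos hble] at r; exact r
        · rw [if_neg hble] at r; exact r.trans hlink.symm
    · exact step hv hc0m (adj_ac k H1 H2 mrow a.val a.isLt ci hci)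
    · exact (step hv hd0m (adj_bd k H1 H2 mrow b.val b.isLt di hdi)).trans hlink.symm
    · by_cases hvc : (Sum.inr (Sum.inr (Sum.inr (Sum.inr (Sum.inl c)))) : VE k) = vc k ci hci
      · rw [show (⟨_, hv⟩ : ↥Sᶜ) = ⟨vc k ci hci, hc0m⟩ from Subtype.ext hvc]
      · refine step hv hc0m ((SimpleGraph.fromRel_adj _ _ _).mpr ⟨hvc, Or.inl trivial⟩)
    · by_cases hvd : (Sum.inr (Sum.inr (Sum.inr (Sum.inr (Sum.inr d)))) : VE k) = vd k di hdi
      · rw [show (⟨_, hv⟩ : ↥Sᶜ) = ⟨vd k di hdi, hd0m⟩ from Subtype.ext hvd]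
        exact hlink.symm
      · exact (step hv hd0m ((SimpleGraph.fromRel_adj _ _ _).mpr ⟨hvd, Or.inl trivial⟩)).trans hlink.symm
  rw [SimpleGraph.connected_iff]
  refine ⟨fun u v => (main u.1 u.2).trans (main v.1 v.2).symm, ⟨⟨vc k ci hci, hc0m⟩⟩⟩
end Stmt13Aux
namespace Stmt13Aux

/-- Side function with values in ℕ (`t` is the side of the `a`/`c` vertices). -/
def sideN (k t : ℕ) : VE k → ℕ
  | Sum.inl x => if x.val < k then 1 else 0
  | Sum.inr (Sum.inl x) => if x.val < k then 1 else 0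
  | Sum.inr (Sum.inr (Sum.inl _)) => t
  | Sum.inr (Sum.inr (Sum.inr (Sum.inl _))) => 1 - t
  | Sum.inr (Sum.inr (Sum.inr (Sum.inr (Sum.inl _)))) => t
  | Sum.inr (Sum.inr (Sum.inr (Sum.inr (Sum.inr _)))) => 1 - t

lemma cut_exists (k : ℕ) (hk : 6 ≤ k) (H1 : SimpleGraph (Fin (2*k-3)))
    (H2 : SimpleGraph (Fin (2*k-5))) (mrow : ℕ → ℕ) (t : ℕ) (ht : t ≤ 1)
    (hsA : (mrow 1 = 1 ∨ mrow 1 = 3) ↔ t = 1)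
    (hsB : (mrow 2 = 1 ∨ mrow 2 = 3) ↔ t = 1)
    (hsC : (mrow 3 = 1 ∨ mrow 3 = 3) ↔ t = 0)
    (hsD : (mrow 4 = 1 ∨ mrow 4 = 3) ↔ t = 0) :
    ∃ S : Set (VE k), S.ncard = 3 ∧
      ¬ ((SimpleGraph.fromRel (edgeRel k H1 H2 mrow)).induce Sᶜ).Connected := by
  set G := SimpleGraph.fromRel (edgeRel k H1 H2 mrow) with hG
  refine ⟨{vX1 k (k-1) (by omega), vX2 k (k-1) (by omega), va k (2*k-4) (by omega)}, ?_, ?_⟩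
  · rw [Set.ncard_insert_of_notMem (by simp [vX1, vX2, va]) (Set.toFinite _),
      Set.ncard_pair (by simp [vX2, va])]
  set S : Set (VE k) := {vX1 k (k-1) (by omega), vX2 k (k-1) (by omega), va k (2*k-4) (by omega)}
    with hSdef
  have memX1 : ∀ x : Fin (2*k), x.val = k-1 → (Sum.inl x : VE k) ∈ S := by
    intro x hx
    have : x = ⟨k-1, by omega⟩ := Fin.ext hx
    rw [this]
    exact Set.mem_insert _ _
  have memX2 : ∀ x : Fin (2*k), x.val = k-1 → (Sum.inr (Sum.inl x) : VE k) ∈ S := by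
    intro x hx
    have : x = ⟨k-1, by omega⟩ := Fin.ext hx
    rw [this]
    exact Set.mem_insert_of_mem _ (Set.mem_insert _ _)
  have memA : ∀ a : Fin (2*k-3), a.val = 2*k-4 → (Sum.inr (Sum.inr (Sum.inl a)) : VE k) ∈ S := by
    intro a hx
    have : a = ⟨2*k-4, by omega⟩ := Fin.ext hx
    rw [this]
    exact Set.mem_insert_of_mem _ (Set.mem_insert_of_mem _ rfl)
  -- every surviving edge preserves the side
  have hpres : ∀ u v : VE k, u ∉ S → v ∉ S → edgeRel k H1 H2 mrow u v →
      sideN k t u = sideN k t v := by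
    intro u v hu hv h
    rcases u with x | x | a | b | c | d
    · rcases v with x' | x' | a' | b' | c' | d'
      · rcases h with ⟨h1, h2⟩ | ⟨h1, h2, _⟩
        · simp only [sideN]; rw [if_pos (by omega), if_pos (by omega)]
        · have hx : x.val ≠ k-1 := fun hh => hu (memX1 x hh)
          have hx' : x'.val ≠ k-1 := fun hh => hv (memX1 x' hh)
          simp only [sideN]; rw [if_neg (by omega), if_neg (by omega)]
      · rcases h with ⟨h1, h2⟩ | ⟨h1, h2, _⟩
        · simp only [sideN]; rw [if_pos (by omega), if_pos (by omega)]
        · have hx : x.val ≠ k-1 := fun hh => hu (memX1 x hh)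
          have hx' : x'.val ≠ k-1 := fun hh => hv (memX2 x' hh)
          simp only [sideN]; rw [if_neg (by omega), if_neg (by omega)]
      · obtain ⟨hcb0, hrow⟩ := h
        by_cases h1 : a'.val < k-2
        · rw [show colBlk k (Sum.inl a') = 1 from by simp only [colBlk]; rw [if_pos h1]] at hrow
          simp only [sideN]
          by_cases hx : x.val < k
          · rw [if_pos hx] at hrow ⊢; omega
          · rw [if_neg hx] at hrow ⊢; omega
        · by_cases h2 : a'.val < 2*k-4
          · rw [show colBlk k (Sum.inl a') = 2 from by
              simp only [colBlk]; rw [if_neg h1, if_pos h2]] at hrow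
            simp only [sideN]
            by_cases hx : x.val < k
            · rw [if_pos hx] at hrow ⊢; omega
            · rw [if_neg hx] at hrow ⊢; omega
          · exact absurd (memA a' (by omega)) hv
      · obtain ⟨hcb0, hrow⟩ := h
        by_cases h1 : b'.val < k-3
        · rw [show colBlk k (Sum.inr (Sum.inl b')) = 3 from by
            simp only [colBlk]; rw [if_pos h1]] at hrow
          simp only [sideN]
          by_cases hx : x.val < k
          · rw [if_pos hx] at hrow ⊢; omega
          · rw [if_neg hx] at hrow ⊢; omega
        · rw [show colBlk k (Sum.inr (Sum.inl b')) = 4 from by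
            simp only [colBlk]; rw [if_neg h1]] at hrow
          simp only [sideN]
          by_cases hx : x.val < k
          · rw [if_pos hx] at hrow ⊢; omega
          · rw [if_neg hx] at hrow ⊢; omega
      · exact absurd h.1 (by simp [colBlk])
      · exact absurd h.1 (by simp [colBlk])
    · rcases v with x' | x' | a' | b' | c' | d'
      · exact h.elim
      · rcases h with ⟨h1, h2⟩ | ⟨h1, h2, _⟩
        · simp only [sideN]; rw [if_pos (by omega), if_pos (by omega)]
        · have hx : x.val ≠ k-1 := fun hh => hu (memX2 x hh)
          have hx' : x'.val ≠ k-1 := fun hh => hv (memX2 x' hh)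
          simp only [sideN]; rw [if_neg (by omega), if_neg (by omega)]
      · obtain ⟨hcb0, hrow⟩ := h
        by_cases h1 : a'.val < k-2
        · rw [show colBlk k (Sum.inl a') = 1 from by simp only [colBlk]; rw [if_pos h1]] at hrow
          simp only [sideN]
          by_cases hx : x.val < k
          · rw [if_pos hx] at hrow ⊢; omega
          · rw [if_neg hx] at hrow ⊢; omega
        · by_cases h2 : a'.val < 2*k-4
          · rw [show colBlk k (Sum.inl a') = 2 from by
              simp only [colBlk]; rw [if_neg h1, if_pos h2]] at hrow
            simp only [sideN]
            by_cases hx : x.val < k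
            · rw [if_pos hx] at hrow ⊢; omega
            · rw [if_neg hx] at hrow ⊢; omega
          · exact absurd (memA a' (by omega)) hv
      · obtain ⟨hcb0, hrow⟩ := h
        by_cases h1 : b'.val < k-3
        · rw [show colBlk k (Sum.inr (Sum.inl b')) = 3 from by
            simp only [colBlk]; rw [if_pos h1]] at hrow
          simp only [sideN]
          by_cases hx : x.val < k
          · rw [if_pos hx] at hrow ⊢; omega
          · rw [if_neg hx] at hrow ⊢; omega
        · rw [show colBlk k (Sum.inr (Sum.inl b')) = 4 from by
            simp only [colBlk]; rw [if_neg h1]] at hrow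
          simp only [sideN]
          by_cases hx : x.val < k
          · rw [if_pos hx] at hrow ⊢; omega
          · rw [if_neg hx] at hrow ⊢; omega
      · exact absurd h.1 (by simp [colBlk])
      · exact absurd h.1 (by simp [colBlk])
    · rcases v with x' | x' | a' | b' | c' | d' <;> first | exact h.elim | rfl
    · rcases v with x' | x' | a' | b' | c' | d' <;> first | exact h.elim | rfl
    · rcases v with x' | x' | a' | b' | c' | d' <;> first | exact h.elim | rfl
    · rcases v with x' | x' | a' | b' | c' | d' <;> first | exact h.elim | rfl
  intro hcon
  have hwalk : ∀ (u v : ↥Sᶜ) (p : (G.induce Sᶜ).Walk u v), sideN k t u.1 = sideN k t v.1 := by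
    intro u v p
    induction p with
    | nil => rfl
    | cons hadj p ih =>
        rename_i a b c
        have h' : G.Adj a.1 b.1 := hadj
        rw [SimpleGraph.fromRel_adj] at h'
        rcases h'.2 with hr | hr
        · exact (hpres a.1 b.1 a.2 b.2 hr).trans ih
        · exact ((hpres b.1 a.1 b.2 a.2 hr).symm).trans ih
  have hm0 : vX1 k 0 (by omega) ∈ Sᶜ := by
    simp only [hSdef, Set.mem_compl_iff, Set.mem_insert_iff, Set.mem_singleton_iff, vX1, vX2,
      va, Sum.inl.injEq, Sum.inr.injEq, Fin.mk.injEq, reduceCtorEq, or_false, false_or]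
    omega
  have hmk : vX1 k k (by omega) ∈ Sᶜ := by
    simp only [hSdef, Set.mem_compl_iff, Set.mem_insert_iff, Set.mem_singleton_iff, vX1, vX2,
      va, Sum.inl.injEq, Sum.inr.injEq, Fin.mk.injEq, reduceCtorEq, or_false, false_or]
    omega
  obtain ⟨p⟩ := hcon.preconnected ⟨vX1 k 0 (by omega), hm0⟩ ⟨vX1 k k (by omega), hmk⟩
  have := hwalk _ _ p
  simp only [vX1, sideN] at this
  rw [if_pos (by omega), if_neg (by omega)] at this
  omega

end Stmt13Aux

/-- For every even `k ≥ 6` and every `(k-4)`-regular graph `H1` of order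
`2k-3` and `(k-6)`-regular graph `H2` of order `2k-5`, the graphs `Γ` and `Γ'` both have
vertex-connectivity exactly `3`. -/
theorem stmt13 (k : ℕ) (hk : 6 ≤ k) (hke : Even k)
    (H1 : SimpleGraph (Fin (2 * k - 3))) (hH1 : IsRegularGraph H1 (k - 4))
    (H2 : SimpleGraph (Fin (2 * k - 5))) (hH2 : IsRegularGraph H2 (k - 6)) :
    HasVertexConnectivity (GammaE k H1 H2) 3 ∧
      HasVertexConnectivity (GammaE' k H1 H2) 3 := by
  constructor
  · constructor
    · obtain ⟨S, h3, hnc⟩ := Stmt13Aux.cut_exists k hk H1 H2 mrowGamma 1 (by omega)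
        (by decide) (by decide) (by decide) (by decide)
      exact ⟨S, h3, hnc⟩
    · intro S hS
      exact Stmt13Aux.conn_del k hk H1 H2 mrowGamma 2 3 1 4
        (by omega) (by omega) (by omega) (by omega)
        (by decide) (by decide) (by decide) (by decide)
        (by omega) (by omega) (Or.inr ⟨by decide, rfl⟩) S (by omega)
  · constructor
    · obtain ⟨S, h3, hnc⟩ := Stmt13Aux.cut_exists k hk H1 H2 mrowGamma' 0 (by omega)
        (by decide) (by decide) (by decide) (by decide)
      exact ⟨S, h3, hnc⟩
    · intro S hS
      exact Stmt13Aux.conn_del k hk H1 H2 mrowGamma' 3 2 4 1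
        (by omega) (by omega) (by omega) (by omega)
        (by decide) (by decide) (by decide) (by decide)
        (by omega) (by omega) (Or.inl ⟨by decide, rfl⟩) S (by omega)
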